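/- Let (aₙ)_{n≥2}, (bₙ)_{n≥2} be sequences of complex numbers with |aₙ| + |bₙ| ≤ 1 for all n ≥ 2. Fix integers m, p ≥ 1 and a real r ∈ [0,1) satisfying r^m + r^p + (2r^{2m} - r^{3m})/(1 - r^m)² + r^{2p}/(1 - r^p) ≤ 1/2. Then r^m + ∑_{n≥2} n(|aₙ|+|bₙ|) r^{mn} + r^p + ∑_{n≥2}(|aₙ|+|bₙ|) r^{pn} ≤ 1/2. -/

import Mathlib

lemma aux_sum_n (q : ℝ) (h0 : 0 ≤ q) (h1 : q < 1) :
    (∑' n : ℕ, ((n : ℝ) + 2) * q ^ (n + 2)) = (2 * q ^ 2 - q ^ 3) / (1 - q) ^ 2 := by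
  have hn : ‖q‖ < 1 := by rwa [Real.norm_eq_abs, abs_of_nonneg h0]
  have hsum : Summable (fun n : ℕ => (n : ℝ) * q ^ n) := by
    simpa using summable_pow_mul_geometric_of_norm_lt_one 1 hn
  have htot : (∑' n : ℕ, (n : ℝ) * q ^ n) = q / (1 - q) ^ 2 :=
    tsum_coe_mul_geometric_of_norm_lt_one hn
  have h1sum : Summable (fun n : ℕ => ((n : ℝ) + 1) * q ^ (n + 1)) := by
    have := (summable_nat_add_iff 1).mpr hsum
    simpa using this
  have e1 : (∑' n : ℕ, (n : ℝ) * q ^ n)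
      = 0 + ∑' n : ℕ, ((n : ℝ) + 1) * q ^ (n + 1) := by
    rw [Summable.tsum_eq_zero_add hsum]
    push_cast
    ring_nf
  have e2 : (∑' n : ℕ, ((n : ℝ) + 1) * q ^ (n + 1))
      = 1 * q ^ 1 + ∑' n : ℕ, ((n : ℝ) + 2) * q ^ (n + 2) := by
    rw [Summable.tsum_eq_zero_add h1sum]
    push_cast
    ring_nf
  have hne : (1 : ℝ) - q ≠ 0 := by linarith
  have : (∑' n : ℕ, ((n : ℝ) + 2) * q ^ (n + 2)) = q / (1 - q) ^ 2 - q := by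
    rw [e2, htot] at e1
    linarith [pow_one q]
  rw [this]
  field_simp
  ring

lemma aux_sum_1 (q : ℝ) (h0 : 0 ≤ q) (h1 : q < 1) :
    (∑' n : ℕ, q ^ (n + 2)) = q ^ 2 / (1 - q) := by
  have hne : (1 : ℝ) - q ≠ 0 := by linarith
  have : (∑' n : ℕ, q ^ (n + 2)) = q ^ 2 * ∑' n : ℕ, q ^ n := by
    rw [← tsum_mul_left]
    congr 1; ext n; rw [pow_add]; ring
  rw [this, tsum_geometric_of_lt_one h0 h1]
  field_simp

theorem stmt_15 (a b : ℕ → ℂ)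
    (hcoef : ∀ n : ℕ, 2 ≤ n → ‖a n‖ + ‖b n‖ ≤ 1)
    (m p : ℕ) (hm : 1 ≤ m) (hp : 1 ≤ p) (r : ℝ) (hr0 : 0 ≤ r) (hr1 : r < 1)
    (hrle : r ^ m + r ^ p
        + (2 * r ^ (2 * m) - r ^ (3 * m)) / (1 - r ^ m) ^ 2
        + r ^ (2 * p) / (1 - r ^ p) ≤ 1 / 2) :
    r ^ m + (∑' n : ℕ, ((n + 2 : ℝ)) * (‖a (n + 2)‖ + ‖b (n + 2)‖) * r ^ (m * (n + 2)))
      + r ^ p + (∑' n : ℕ, (‖a (n + 2)‖ + ‖b (n + 2)‖) * r ^ (p * (n + 2))) ≤ 1 / 2 := by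
  set c : ℕ → ℝ := fun n => ‖a (n + 2)‖ + ‖b (n + 2)‖ with hc
  have hc0 : ∀ n, 0 ≤ c n := fun n => by positivity
  have hc1 : ∀ n, c n ≤ 1 := fun n => hcoef (n + 2) (by omega)
  set x := r ^ m with hx
  set y := r ^ p with hy
  have hx0 : 0 ≤ x := pow_nonneg hr0 m
  have hx1 : x < 1 := pow_lt_one₀ hr0 hr1 (by omega)
  have hy0 : 0 ≤ y := pow_nonneg hr0 p
  have hy1 : y < 1 := pow_lt_one₀ hr0 hr1 (by omega)
  have hxn : ‖x‖ < 1 := by rwa [Real.norm_eq_abs, abs_of_nonneg hx0]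
  -- summability of dominating series
  have hsumx : Summable (fun n : ℕ => ((n : ℝ) + 2) * x ^ (n + 2)) := by
    have hsum : Summable (fun n : ℕ => (n : ℝ) * x ^ n) := by
      simpa using summable_pow_mul_geometric_of_norm_lt_one 1 hxn
    have := (summable_nat_add_iff 2).mpr hsum
    simpa using this
  have hsumy : Summable (fun n : ℕ => y ^ (n + 2)) := by
    have : Summable (fun n : ℕ => y ^ n) := summable_geometric_of_lt_one hy0 hy1
    exact (summable_nat_add_iff 2).mpr this
  -- rewrite exponents
  have erx : ∀ n : ℕ, r ^ (m * (n + 2)) = x ^ (n + 2) := fun n => pow_mul r m (n + 2)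
  have ery : ∀ n : ℕ, r ^ (p * (n + 2)) = y ^ (n + 2) := fun n => pow_mul r p (n + 2)
  have hle1 : ∀ n : ℕ, ((n : ℝ) + 2) * c n * r ^ (m * (n + 2)) ≤ ((n : ℝ) + 2) * x ^ (n + 2) := by
    intro n
    rw [erx n]
    have := mul_le_mul_of_nonneg_right (hc1 n) (pow_nonneg hx0 (n + 2))
    calc ((n : ℝ) + 2) * c n * x ^ (n + 2) = ((n : ℝ) + 2) * (c n * x ^ (n + 2)) := by ring
      _ ≤ ((n : ℝ) + 2) * (1 * x ^ (n + 2)) := by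
          apply mul_le_mul_of_nonneg_left this (by positivity)
      _ = ((n : ℝ) + 2) * x ^ (n + 2) := by ring
  have hle2 : ∀ n : ℕ, c n * r ^ (p * (n + 2)) ≤ y ^ (n + 2) := by
    intro n
    rw [ery n]
    calc c n * y ^ (n + 2) ≤ 1 * y ^ (n + 2) :=
          mul_le_mul_of_nonneg_right (hc1 n) (pow_nonneg hy0 (n + 2))
      _ = y ^ (n + 2) := one_mul _
  have hsum1 : Summable (fun n : ℕ => ((n : ℝ) + 2) * c n * r ^ (m * (n + 2))) :=
    Summable.of_nonneg_of_le (fun n => by positivity) hle1 hsumx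
  have hsum2 : Summable (fun n : ℕ => c n * r ^ (p * (n + 2))) :=
    Summable.of_nonneg_of_le (fun n => by positivity) hle2 hsumy
  have hb1 : (∑' n : ℕ, ((n : ℝ) + 2) * c n * r ^ (m * (n + 2)))
      ≤ (2 * x ^ 2 - x ^ 3) / (1 - x) ^ 2 := by
    rw [← aux_sum_n x hx0 hx1]
    exact Summable.tsum_le_tsum hle1 hsum1 hsumx
  have hb2 : (∑' n : ℕ, c n * r ^ (p * (n + 2))) ≤ y ^ 2 / (1 - y) := by
    rw [← aux_sum_1 y hy0 hy1]
    exact Summable.tsum_le_tsum hle2 hsum2 hsumy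
  have ex2 : r ^ (2 * m) = x ^ 2 := by rw [hx, ← pow_mul, Nat.mul_comm]
  have ex3 : r ^ (3 * m) = x ^ 3 := by rw [hx, ← pow_mul, Nat.mul_comm]
  have ey2 : r ^ (2 * p) = y ^ 2 := by rw [hy, ← pow_mul, Nat.mul_comm]
  rw [ex2, ex3, ey2] at hrle
  linarith
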